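/- The polynomials S_n defined by S_0(x)=1, S_1(x)=x, and S_{n+1}(x) = x·S_n(x) − n²·S_{n−1}(x) satisfy the explicit formula S_n(x) = i^n · n! · Σ_{k=0}^{n} ((−1)^k / k!) · C(n,k) · Π_{j=0}^{k−1} (i x + 1 + 2j). -/

import Mathlib

open Finset

lemma choose_key (n k : ℕ) :
    ((n : ℤ) + 2) * ((n+2).choose k) =
      (k : ℤ) * ((n+1).choose (k-1)) + (2*(k:ℤ)+1) * ((n+1).choose k)
        + ((n:ℤ)+1) * (n.choose k) := by
  cases k with
  | zero => push_cast [Nat.choose]; ring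
  | succ k =>
    have pascal2 : (n+2).choose (k+1) = (n+1).choose k + (n+1).choose (k+1) :=
      Nat.choose_succ_succ _ _
    have pascal1 : (n+1).choose (k+1) = n.choose k + n.choose (k+1) :=
      Nat.choose_succ_succ _ _
    have L1 : (n+1) * n.choose k = (n+1).choose (k+1) * (k+1) := Nat.add_one_mul_choose_eq n k
    have L2 : ((n+1).choose (k+1) : ℤ) * ((k:ℤ)+1) = ((n+1).choose k : ℤ) * ((n:ℤ)+1-k) := by
      rcases le_or_gt k (n+1) with h | h
      · have h2 := Nat.choose_succ_right_eq (n+1) k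
        have hc : ((n+1 - k : ℕ) : ℤ) = (n:ℤ)+1-k := by
          push_cast [Nat.cast_sub h]; ring
        have := congrArg (fun m : ℕ => (m : ℤ)) h2
        push_cast at this
        rw [this, hc]
      · have h1 : (n+1).choose (k+1) = 0 := Nat.choose_eq_zero_of_lt (by omega)
        have h2 : (n+1).choose k = 0 := Nat.choose_eq_zero_of_lt h
        simp [h1, h2]
    have hp2 := congrArg (fun m : ℕ => (m : ℤ)) pascal2
    have hp1 := congrArg (fun m : ℕ => (m : ℤ)) pascal1
    have hL1 := congrArg (fun m : ℕ => (m : ℤ)) L1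
    push_cast at hp2 hp1 hL1
    simp only [Nat.succ_sub_one]
    push_cast
    linear_combination ((n:ℤ)+2) * hp2 + ((n:ℤ)+1) * hp1 + hL1 - L2

lemma sum_key (n : ℕ) (x : ℂ) (c Pp : ℕ → ℂ)
    (hc : ∀ k, c k = (-1:ℂ)^k / (k.factorial : ℂ))
    (hPp : ∀ k, Pp k = ∏ j ∈ range k, (Complex.I * x + 1 + 2 * (j:ℂ))) :
    -((n:ℂ)+2) * (∑ k ∈ range (n+3), c k * ((n+2).choose k : ℂ) * Pp k)
      = (Complex.I * x) * (∑ k ∈ range (n+2), c k * ((n+1).choose k : ℂ) * Pp k)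
        - ((n:ℂ)+1) * (∑ k ∈ range (n+1), c k * (n.choose k : ℂ) * Pp k) := by
  have hfac : ∀ k : ℕ, (k.factorial : ℂ) ≠ 0 := fun k => Nat.cast_ne_zero.2 (Nat.factorial_ne_zero k)
  have hPsucc : ∀ k : ℕ, Pp (k+1) = Pp k * (Complex.I * x + 1 + 2*(k:ℂ)) := by
    intro k; rw [hPp, hPp, prod_range_succ]
  have hcsucc : ∀ k : ℕ, -((k:ℂ)+1) * c (k+1) = c k := by
    intro k
    have hk1 : ((k:ℂ)+1) ≠ 0 := by
      have := (Nat.cast_ne_zero (R := ℂ)).2 (Nat.succ_ne_zero k)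
      push_cast at this
      exact this
    rw [hc, hc, Nat.factorial_succ]
    push_cast
    field_simp [hfac k, hk1]
    ring
  -- shift identity
  have hshift : ∑ k ∈ range (n+3), (-(k:ℂ)) * c k * (((n+1).choose (k-1) : ℕ) : ℂ) * Pp k
      = ∑ k ∈ range (n+2), c k * ((n+1).choose k : ℂ) * Pp (k+1) := by
    rw [Finset.sum_range_succ' (fun k => (-(k:ℂ)) * c k * (((n+1).choose (k-1) : ℕ) : ℂ) * Pp k) (n+2)]
    simp only [Nat.cast_zero, neg_zero, zero_mul, add_zero]
    apply Finset.sum_congr rfl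
    intro k _
    simp only [Nat.add_sub_cancel, Nat.cast_add, Nat.cast_one]
    linear_combination (((n+1).choose k : ℂ) * Pp (k+1)) * hcsucc k
  have e1 : ∑ k ∈ range (n+2), c k * ((n+1).choose k : ℂ) * Pp k
      = ∑ k ∈ range (n+3), c k * ((n+1).choose k : ℂ) * Pp k := by
    rw [Finset.sum_range_succ (fun k => c k * ((n+1).choose k : ℂ) * Pp k) (n+2),
      Nat.choose_eq_zero_of_lt (by omega : n+1 < n+2)]
    simp
  have e2 : ∑ k ∈ range (n+1), c k * (n.choose k : ℂ) * Pp k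
      = ∑ k ∈ range (n+3), c k * (n.choose k : ℂ) * Pp k := by
    rw [Finset.sum_range_succ (fun k => c k * (n.choose k : ℂ) * Pp k) (n+2),
      Nat.choose_eq_zero_of_lt (by omega : n < n+2),
      Finset.sum_range_succ (fun k => c k * (n.choose k : ℂ) * Pp k) (n+1),
      Nat.choose_eq_zero_of_lt (by omega : n < n+1)]
    simp
  have hIx : (Complex.I * x) * (∑ k ∈ range (n+2), c k * ((n+1).choose k : ℂ) * Pp k)
      = ∑ k ∈ range (n+3), ((-(k:ℂ)) * c k * (((n+1).choose (k-1) : ℕ) : ℂ)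
          - (1 + 2*(k:ℂ)) * c k * ((n+1).choose k : ℂ)) * Pp k := by
    rw [Finset.mul_sum]
    have expand : ∑ k ∈ range (n+3), ((-(k:ℂ)) * c k * (((n+1).choose (k-1) : ℕ) : ℂ)
          - (1 + 2*(k:ℂ)) * c k * ((n+1).choose k : ℂ)) * Pp k
        = ∑ k ∈ range (n+3), ((-(k:ℂ)) * c k * (((n+1).choose (k-1) : ℕ) : ℂ) * Pp k
            - (1 + 2*(k:ℂ)) * c k * ((n+1).choose k : ℂ) * Pp k) := by
      apply Finset.sum_congr rfl; intro k _; ring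
    rw [expand, Finset.sum_sub_distrib, hshift]
    have e3 : ∑ k ∈ range (n+3), (1 + 2*(k:ℂ)) * c k * ((n+1).choose k : ℂ) * Pp k
        = ∑ k ∈ range (n+2), (1 + 2*(k:ℂ)) * c k * ((n+1).choose k : ℂ) * Pp k := by
      rw [Finset.sum_range_succ (fun k => (1 + 2*(k:ℂ)) * c k * ((n+1).choose k : ℂ) * Pp k) (n+2),
        Nat.choose_eq_zero_of_lt (by omega : n+1 < n+2)]
      simp
    rw [e3, ← Finset.sum_sub_distrib]
    apply Finset.sum_congr rfl
    intro k _
    rw [hPsucc k]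
    ring
  rw [hIx, e2, Finset.mul_sum, Finset.mul_sum, ← Finset.sum_sub_distrib]
  apply Finset.sum_congr rfl
  intro k _
  have hck := choose_key n k
  have hckC : ((n:ℂ)+2) * ((n+2).choose k : ℂ)
      = (k:ℂ) * (((n+1).choose (k-1) : ℕ) : ℂ) + (2*(k:ℂ)+1) * ((n+1).choose k : ℂ)
        + ((n:ℂ)+1) * (n.choose k : ℂ) := by
    have := congrArg (fun z : ℤ => (z : ℂ)) hck
    push_cast at this
    convert this using 2
  linear_combination (-(c k) * Pp k) * hckC

noncomputable def Tpoly (n : ℕ) (x : ℂ) : ℂ :=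
  Complex.I ^ n * (n.factorial : ℂ) *
    ∑ k ∈ range (n + 1), ((-1 : ℂ) ^ k / (k.factorial : ℂ)) * (n.choose k : ℂ) *
      ∏ j ∈ range k, (Complex.I * x + 1 + 2 * (j : ℂ))

lemma Tpoly_zero (x : ℂ) : Tpoly 0 x = 1 := by simp [Tpoly]

lemma Tpoly_one (x : ℂ) : Tpoly 1 x = x := by
  simp [Tpoly, Finset.sum_range_succ]
  linear_combination (-x) * Complex.I_sq

lemma Tpoly_rec (n : ℕ) (x : ℂ) :
    Tpoly (n+2) x = x * Tpoly (n+1) x - ((n:ℂ)+1)^2 * Tpoly n x := by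
  have hS := sum_key n x (fun k => (-1 : ℂ) ^ k / (k.factorial : ℂ))
    (fun k => ∏ j ∈ range k, (Complex.I * x + 1 + 2 * (j : ℂ)))
    (fun k => rfl) (fun k => rfl)
  simp only [Tpoly]
  have h3 : n + 2 + 1 = n + 3 := rfl
  have h2 : n + 1 + 1 = n + 2 := rfl
  rw [h3, h2]
  have hI2 : Complex.I ^ (n+2) = -Complex.I ^ n := by
    rw [pow_succ, pow_succ, mul_assoc, Complex.I_mul_I]; ring
  have hI1 : Complex.I ^ (n+1) = Complex.I ^ n * Complex.I := pow_succ _ _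
  have hF2 : ((n+2).factorial : ℂ) = ((n:ℂ)+2) * (((n:ℂ)+1) * (n.factorial : ℂ)) := by
    rw [Nat.factorial_succ, Nat.factorial_succ]; push_cast; ring
  have hF1 : ((n+1).factorial : ℂ) = ((n:ℂ)+1) * (n.factorial : ℂ) := by
    rw [Nat.factorial_succ]; push_cast; ring
  rw [hI2, hI1, hF2, hF1]
  linear_combination (Complex.I ^ n * (((n:ℂ)+1) * (n.factorial : ℂ))) * hS

open Finset in
theorem stmt_0 (S : ℕ → ℂ → ℂ)
    (h0 : ∀ x, S 0 x = 1) (h1 : ∀ x, S 1 x = x)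
    (hrec : ∀ n : ℕ, ∀ x, S (n + 2) x = x * S (n + 1) x - ((n : ℂ) + 1) ^ 2 * S n x) :
    ∀ n : ℕ, ∀ x : ℂ, S n x = Complex.I ^ n * (n.factorial : ℂ) *
      ∑ k ∈ range (n + 1), ((-1 : ℂ) ^ k / (k.factorial : ℂ)) * (n.choose k : ℂ) *
        ∏ j ∈ range k, (Complex.I * x + 1 + 2 * (j : ℂ)) := by
  have key : ∀ n : ℕ, (∀ x, S n x = Tpoly n x) ∧ (∀ x, S (n+1) x = Tpoly (n+1) x) := by
    intro n
    induction n with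
    | zero =>
      exact ⟨fun x => by rw [h0, Tpoly_zero], fun x => by rw [h1, Tpoly_one]⟩
    | succ m ih =>
      refine ⟨ih.2, fun x => ?_⟩
      rw [hrec, ih.1 x, ih.2 x, Tpoly_rec]
  intro n x
  exact (key n).1 x
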